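/- Let d ≥ 1, T ≥ 1, let x_1, …, x_T ∈ ℝ^d, and let λ > 0. Then det( V_T(λ) ) = λ^d · Π_{t=1}^T ( 1 + x_tᵀ V_{t-1}(λ)⁻¹ x_t ). -/

import Mathlib

open Matrix

theorem aux_posdef (d : ℕ) (x : ℕ → Fin d → ℝ) (lam : ℝ) (hlam : 0 < lam)
    (V : ℕ → Matrix (Fin d) (Fin d) ℝ)
    (hV : ∀ k, V k = lam • (1 : Matrix (Fin d) (Fin d) ℝ)
        + ∑ s ∈ Finset.Icc 1 k, Matrix.vecMulVec (x s) (x s)) (k : ℕ) :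
    (V k).PosDef := by
  refine posDef_iff_dotProduct_mulVec.mpr ⟨?_, ?_⟩
  · rw [hV k]
    ext i j
    simp [Matrix.one_apply, Matrix.vecMulVec_apply, conjTranspose, Matrix.transpose_apply,
      Matrix.sum_apply, mul_comm]
  · intro y hy
    rw [hV k]
    have h1 : (lam • (1 : Matrix (Fin d) (Fin d) ℝ)) *ᵥ y = lam • y := by
      simp [Matrix.smul_mulVec]
    rw [add_mulVec, dotProduct_add, h1]
    have h2 : star y ⬝ᵥ lam • y = lam * (y ⬝ᵥ y) := by
      simp [dotProduct_smul, star_trivial]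
    rw [h2]
    have hypos : 0 < y ⬝ᵥ y := by
      have := Matrix.dotProduct_star_self_pos_iff (v := y) |>.mpr hy
      simpa [star_trivial] using this
    refine add_pos_of_pos_of_nonneg (mul_pos hlam hypos) ?_
    have hms : (∑ s ∈ Finset.Icc 1 k, Matrix.vecMulVec (x s) (x s)) *ᵥ y
        = ∑ s ∈ Finset.Icc 1 k, Matrix.vecMulVec (x s) (x s) *ᵥ y := by
      ext i
      simp [mulVec, dotProduct, Matrix.sum_apply, Finset.sum_mul]
      rw [Finset.sum_comm]
    rw [hms]
    have hds : star y ⬝ᵥ ∑ s ∈ Finset.Icc 1 k, Matrix.vecMulVec (x s) (x s) *ᵥ y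
        = ∑ s ∈ Finset.Icc 1 k, star y ⬝ᵥ (Matrix.vecMulVec (x s) (x s) *ᵥ y) := by
      simp [dotProduct, Finset.sum_apply, Finset.mul_sum]
      rw [Finset.sum_comm]
    rw [hds]
    refine Finset.sum_nonneg fun s _ => ?_
    have : Matrix.vecMulVec (x s) (x s) *ᵥ y = (x s ⬝ᵥ y) • x s := by
      ext i
      simp [Matrix.vecMulVec_apply, mulVec, dotProduct, Finset.mul_sum, mul_assoc]
      rw [Finset.sum_mul]
      exact Finset.sum_congr rfl fun b _ => by ring
    rw [this]
    have : star y ⬝ᵥ (x s ⬝ᵥ y) • x s = (x s ⬝ᵥ y) * (y ⬝ᵥ x s) := by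
      simp [star_trivial, dotProduct_smul, mul_comm]
    rw [this, dotProduct_comm]
    exact mul_self_nonneg _

/-- Determinant-trace identity for the design matrix. -/
theorem det_product_identity (d T : ℕ) (hd : 1 ≤ d) (hT : 1 ≤ T)
    (x : ℕ → Fin d → ℝ)
    (lam : ℝ) (hlam : 0 < lam)
    (V : ℕ → Matrix (Fin d) (Fin d) ℝ)
    (hV : ∀ k, V k = lam • (1 : Matrix (Fin d) (Fin d) ℝ)
        + ∑ s ∈ Finset.Icc 1 k, Matrix.vecMulVec (x s) (x s)) :
    (V T).det = lam ^ d * ∏ t ∈ Finset.Icc 1 T, (1 + x t ⬝ᵥ (V (t - 1))⁻¹ *ᵥ x t) := by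
  clear hT hd
  induction T with
  | zero =>
      simp [hV 0, Matrix.det_smul]
  | succ k ih =>
      have hstep : V (k + 1) = V k + Matrix.vecMulVec (x (k + 1)) (x (k + 1)) := by
        rw [hV (k + 1), hV k, Finset.sum_Icc_succ_top (Nat.le_add_left 1 k), add_assoc]
      have hunit : IsUnit (V k).det :=
        (aux_posdef d x lam hlam V hV k).det_pos.ne'.isUnit
      rw [hstep, Matrix.vecMulVec_eq Unit,
        Matrix.det_add_replicateCol_mul_replicateRow hunit,
        Finset.prod_Icc_succ_top (Nat.le_add_left 1 k), ih]
      have hd1 : (1 + Matrix.replicateRow Unit (x (k + 1)) * (V k)⁻¹ * Matrix.replicateCol Unit (x (k + 1))).det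
          = 1 + x (k + 1) ⬝ᵥ (V k)⁻¹ *ᵥ x (k + 1) := by
        rw [Matrix.det_unique]
        simp [Matrix.mul_apply, Matrix.replicateRow, Matrix.replicateCol, dotProduct, mulVec, Finset.mul_sum,
          Matrix.one_apply]
        rw [Finset.sum_comm]
        refine Finset.sum_congr rfl fun a _ => ?_
        rw [Finset.sum_mul]
        exact Finset.sum_congr rfl fun b _ => by ring
      rw [hd1]
      simp [mul_assoc, mul_comm, mul_left_comm]
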